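/- Set a_n = exp(√n) for n ≥ 1. Then the sequence (a_n) is slowly increasing, i.e. (∑_{k=1}^n a_k²)/(∑_{k=1}^n a_k)² → 0 as n → ∞, but the series ∑_{n≥1} a_n² / (∑_{k=1}^n a_k)² diverges to +∞. -/

import Mathlib

open Filter Finset Real

lemma geo_le' {r : ℝ} (h0 : 0 ≤ r) (h1 : r < 1) (n : ℕ) :
    ∑ i ∈ range n, r ^ i ≤ (1 - r)⁻¹ := by
  have hr : r ≠ 1 := ne_of_lt h1
  have hd : (0:ℝ) < 1 - r := by linarith
  rw [geom_sum_eq hr, div_le_iff_of_neg (by linarith : r - 1 < 0)]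
  have hrn : 0 ≤ r ^ n := pow_nonneg h0 n
  have : (1 - r)⁻¹ * (1 - r) = 1 := inv_mul_cancel₀ hd.ne'
  nlinarith

lemma sqrtN_tendsto' : Tendsto (fun n : ℕ => Real.sqrt n) atTop atTop := by
  rw [tendsto_atTop_atTop]
  intro b
  refine ⟨⌈b⌉₊ ^ 2, fun n hn => ?_⟩
  calc b ≤ ⌈b⌉₊ := Nat.le_ceil b
    _ = Real.sqrt ((⌈b⌉₊ : ℝ) ^ 2) := (Real.sqrt_sq (by positivity)).symm
    _ ≤ Real.sqrt n := Real.sqrt_le_sqrt (by exact_mod_cast hn)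

lemma sum_exp_upper' {c : ℝ} (hc0 : 0 < c) (hc2 : c ≤ 2) {n : ℕ} (hn : 1 ≤ n) :
    ∑ k ∈ Icc 1 n, Real.exp (c * Real.sqrt k) ≤ 8 / c * Real.sqrt n * Real.exp (c * Real.sqrt n) := by
  have hsn1 : (1:ℝ) ≤ Real.sqrt n := by
    rw [show (1:ℝ) = Real.sqrt 1 by simp]
    exact Real.sqrt_le_sqrt (by exact_mod_cast hn)
  have hsn0 : (0:ℝ) < Real.sqrt n := lt_of_lt_of_le one_pos hsn1
  set x : ℝ := c / (2 * Real.sqrt n) with hxdef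
  have hx0 : 0 < x := by positivity
  have hx1 : x ≤ 1 := by
    rw [hxdef, div_le_one (by positivity)]; linarith
  set r : ℝ := Real.exp (-x) with hrdef
  have hr0 : 0 < r := Real.exp_pos _
  have hr1 : r < 1 := by
    rw [hrdef, Real.exp_lt_one_iff]; linarith
  have hterm : ∀ k ∈ Icc 1 n, Real.exp (c * Real.sqrt k) ≤ Real.exp (c * Real.sqrt n) * r ^ (n - k) := by
    intro k hk
    rw [mem_Icc] at hk
    rw [hrdef, ← Real.exp_nat_mul, ← Real.exp_add, Real.exp_le_exp]
    have hcast : ((n - k : ℕ) : ℝ) = (n : ℝ) - (k : ℝ) := by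
      rw [Nat.cast_sub hk.2]
    rw [hcast, hxdef]
    have hsk0 : (0:ℝ) ≤ Real.sqrt k := Real.sqrt_nonneg _
    have hskn : Real.sqrt k ≤ Real.sqrt n := Real.sqrt_le_sqrt (by exact_mod_cast hk.2)
    have h2 : Real.sqrt n * Real.sqrt n = (n : ℝ) := Real.mul_self_sqrt (by positivity)
    have h3 : Real.sqrt k * Real.sqrt k = (k : ℝ) := Real.mul_self_sqrt (by positivity)
    have key : ((n:ℝ) - k) / (2 * Real.sqrt n) ≤ Real.sqrt n - Real.sqrt k := by
      rw [div_le_iff₀ (by positivity)]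
      nlinarith [sq_nonneg (Real.sqrt n - Real.sqrt k)]
    have hmul := mul_le_mul_of_nonneg_left key hc0.le
    have heq : ((n:ℝ) - k) * -(c / (2 * Real.sqrt n)) = -(c * (((n:ℝ) - k) / (2 * Real.sqrt n))) := by
      ring
    rw [heq]
    linarith
  have hre : (1:ℝ) / 4 ≤ r := by
    have h1 : Real.exp (-1) ≤ r := Real.exp_le_exp.2 (by linarith)
    have he : Real.exp 1 < 2.7182818286 := Real.exp_one_lt_d9
    have hp : (0:ℝ) < Real.exp 1 := Real.exp_pos 1
    have h4 : Real.exp (-1) * Real.exp 1 = 1 := by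
      rw [← Real.exp_add]; norm_num
    nlinarith
  have hinv : (1 - r)⁻¹ ≤ 8 / c * Real.sqrt n := by
    have h1 : x + 1 ≤ Real.exp x := Real.add_one_le_exp x
    have h2 : Real.exp x * r = 1 := by rw [hrdef, ← Real.exp_add]; norm_num
    have h3 : x / 4 ≤ 1 - r := by nlinarith
    have h4 : (0:ℝ) < x / 4 := by linarith
    have h5 := inv_anti₀ h4 h3
    have h6 : (x / 4)⁻¹ = 8 / c * Real.sqrt n := by
      rw [hxdef]
      field_simp
      ring
    linarith [h6 ▸ h5]
  calc ∑ k ∈ Icc 1 n, Real.exp (c * Real.sqrt k)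
      ≤ ∑ k ∈ Icc 1 n, Real.exp (c * Real.sqrt n) * r ^ (n - k) := sum_le_sum hterm
    _ = Real.exp (c * Real.sqrt n) * ∑ k ∈ Icc 1 n, r ^ (n - k) := by rw [mul_sum]
    _ = Real.exp (c * Real.sqrt n) * ∑ i ∈ range n, r ^ i := by
        congr 1
        rw [← Finset.Ico_add_one_right_eq_Icc, Finset.sum_Ico_eq_sum_range]
        rw [show n + 1 - 1 = n from rfl, ← Finset.sum_range_reflect]
        apply Finset.sum_congr rfl
        intro i hi
        rw [Finset.mem_range] at hi
        congr 1
        omega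
    _ ≤ Real.exp (c * Real.sqrt n) * (1 - r)⁻¹ :=
        mul_le_mul_of_nonneg_left (geo_le' hr0.le hr1 n) (Real.exp_pos _).le
    _ ≤ 8 / c * Real.sqrt n * Real.exp (c * Real.sqrt n) := by
        rw [mul_comm]
        exact mul_le_mul_of_nonneg_right hinv (Real.exp_pos _).le

lemma sum_exp_lower' {n : ℕ} (hn : 1 ≤ n) :
    Real.sqrt n / 2 * Real.exp (Real.sqrt n - 1) ≤ ∑ k ∈ Icc 1 n, Real.exp (Real.sqrt k) := by
  set m := Nat.sqrt n with hmdef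
  have hm1 : 1 ≤ m := Nat.sqrt_pos.2 hn
  have hmn : m ≤ n := Nat.sqrt_le_self n
  have hsn1 : (1:ℝ) ≤ Real.sqrt n := by
    rw [show (1:ℝ) = Real.sqrt 1 by simp]
    exact Real.sqrt_le_sqrt (by exact_mod_cast hn)
  have hms : (m:ℝ) ≤ Real.sqrt n := by
    rw [show (m:ℝ) = Real.sqrt ((m:ℝ)^2) from (Real.sqrt_sq (by positivity)).symm]
    apply Real.sqrt_le_sqrt
    have := Nat.sqrt_le' n
    rw [← hmdef] at this
    exact_mod_cast this
  have hsub : Icc (n - m + 1) n ⊆ Icc 1 n := by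
    intro k hk
    rw [mem_Icc] at hk ⊢
    omega
  have hstep : ∑ k ∈ Icc (n - m + 1) n, Real.exp (Real.sqrt k) ≤ ∑ k ∈ Icc 1 n, Real.exp (Real.sqrt k) :=
    Finset.sum_le_sum_of_subset_of_nonneg hsub (fun _ _ _ => (Real.exp_pos _).le)
  have hterm : ∀ k ∈ Icc (n - m + 1) n, Real.exp (Real.sqrt n - 1) ≤ Real.exp (Real.sqrt k) := by
    intro k hk
    rw [mem_Icc] at hk
    rw [Real.exp_le_exp]
    have hnk : (n:ℝ) - (k:ℝ) ≤ (m:ℝ) - 1 := by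
      have : n + 1 ≤ k + m := by omega
      have := (Nat.cast_le (α := ℝ)).2 this
      push_cast at this
      linarith
    have hk1 : 1 ≤ k := by omega
    have hsk0 : (0:ℝ) ≤ Real.sqrt k := Real.sqrt_nonneg _
    have h2 : Real.sqrt n * Real.sqrt n = (n : ℝ) := Real.mul_self_sqrt (by positivity)
    have h3 : Real.sqrt k * Real.sqrt k = (k : ℝ) := Real.mul_self_sqrt (by positivity)
    have hskn : Real.sqrt k ≤ Real.sqrt n := Real.sqrt_le_sqrt (by exact_mod_cast hk.2)
    nlinarith
  have hcard : (Icc (n - m + 1) n).card = m := by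
    rw [Nat.card_Icc]; omega
  have hsum2 : (m:ℝ) * Real.exp (Real.sqrt n - 1) ≤ ∑ k ∈ Icc (n - m + 1) n, Real.exp (Real.sqrt k) := by
    calc (m:ℝ) * Real.exp (Real.sqrt n - 1)
        = ∑ _k ∈ Icc (n - m + 1) n, Real.exp (Real.sqrt n - 1) := by
          rw [Finset.sum_const, hcard, nsmul_eq_mul]
      _ ≤ _ := Finset.sum_le_sum hterm
  have hsm : Real.sqrt n / 2 * Real.exp (Real.sqrt n - 1) ≤ (m:ℝ) * Real.exp (Real.sqrt n - 1) := by
    apply mul_le_mul_of_nonneg_right _ (Real.exp_pos _).le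
    have h2 := Nat.lt_succ_sqrt n
    rw [← hmdef] at h2
    have hlt : (n:ℝ) < ((m:ℝ)+1) * ((m:ℝ)+1) := by exact_mod_cast h2
    have hm1' : (1:ℝ) ≤ m := by exact_mod_cast hm1
    have : Real.sqrt n ≤ 2 * m := by
      rw [show (2*(m:ℝ)) = Real.sqrt ((2*(m:ℝ))^2) from (Real.sqrt_sq (by positivity)).symm]
      apply Real.sqrt_le_sqrt
      nlinarith
    linarith
  linarith

/-- The sequence `a_n = exp(√n)` is slowly increasing, but the series
`∑_n a_n² / (∑_{k=1}^n a_k)²` diverges to `+∞`. -/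
theorem stmt_13 :
    Tendsto (fun n : ℕ =>
        (∑ k ∈ Finset.Icc 1 n, (Real.exp (Real.sqrt (k : ℝ))) ^ 2) /
          (∑ k ∈ Finset.Icc 1 n, Real.exp (Real.sqrt (k : ℝ))) ^ 2)
      atTop (nhds 0) ∧
    Tendsto (fun N : ℕ => ∑ n ∈ Finset.Icc 1 N,
        (Real.exp (Real.sqrt (n : ℝ))) ^ 2 /
          (∑ k ∈ Finset.Icc 1 n, Real.exp (Real.sqrt (k : ℝ))) ^ 2)
      atTop atTop := by
  set A : ℕ → ℝ := fun n => ∑ k ∈ Finset.Icc 1 n, Real.exp (Real.sqrt (k : ℝ)) with hA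
  -- rewrite of squared terms
  have hsq : ∀ n : ℕ, (∑ k ∈ Finset.Icc 1 n, (Real.exp (Real.sqrt (k : ℝ))) ^ 2)
      = ∑ k ∈ Finset.Icc 1 n, Real.exp (2 * Real.sqrt (k : ℝ)) := by
    intro n
    apply Finset.sum_congr rfl
    intro k _
    rw [sq, ← Real.exp_add, two_mul]
  -- bounds valid for n ≥ 1
  have hA_up : ∀ n : ℕ, 1 ≤ n → A n ≤ 8 * Real.sqrt n * Real.exp (Real.sqrt n) := by
    intro n hn
    have := sum_exp_upper' (c := 1) one_pos (by norm_num) hn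
    simpa using this
  have hA_lo : ∀ n : ℕ, 1 ≤ n →
      Real.sqrt n / 2 * Real.exp (Real.sqrt n - 1) ≤ A n := fun n hn => sum_exp_lower' hn
  have hA_pos : ∀ n : ℕ, 1 ≤ n → 0 < A n := by
    intro n hn
    have h1 : (1:ℝ) ≤ Real.sqrt n := by
      rw [show (1:ℝ) = Real.sqrt 1 by simp]
      exact Real.sqrt_le_sqrt (by exact_mod_cast hn)
    have := hA_lo n hn
    nlinarith [Real.exp_pos (Real.sqrt n - 1)]
  have hS_up : ∀ n : ℕ, 1 ≤ n →
      (∑ k ∈ Finset.Icc 1 n, (Real.exp (Real.sqrt (k : ℝ))) ^ 2)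
        ≤ 4 * Real.sqrt n * Real.exp (2 * Real.sqrt n) := by
    intro n hn
    rw [hsq]
    have := sum_exp_upper' (c := 2) two_pos (le_refl 2) hn
    norm_num at this
    linarith
  constructor
  · -- part 1
    have hbnd : ∀ n : ℕ, 1 ≤ n →
        (∑ k ∈ Finset.Icc 1 n, (Real.exp (Real.sqrt (k : ℝ))) ^ 2) / (A n) ^ 2
          ≤ 16 * (Real.exp 1) ^ 2 / Real.sqrt n := by
      intro n hn
      have hsn1 : (1:ℝ) ≤ Real.sqrt n := by
        rw [show (1:ℝ) = Real.sqrt 1 by simp]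
        exact Real.sqrt_le_sqrt (by exact_mod_cast hn)
      have hsn0 : (0:ℝ) < Real.sqrt n := lt_of_lt_of_le one_pos hsn1
      have hd_pos : (0:ℝ) < (Real.sqrt n / 2 * Real.exp (Real.sqrt n - 1)) ^ 2 := by positivity
      have hdle : (Real.sqrt n / 2 * Real.exp (Real.sqrt n - 1)) ^ 2 ≤ (A n) ^ 2 := by
        apply pow_le_pow_left₀ (by positivity) (hA_lo n hn)
      have h1 : (∑ k ∈ Finset.Icc 1 n, (Real.exp (Real.sqrt (k : ℝ))) ^ 2) / (A n) ^ 2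
          ≤ (4 * Real.sqrt n * Real.exp (2 * Real.sqrt n)) /
            (Real.sqrt n / 2 * Real.exp (Real.sqrt n - 1)) ^ 2 :=
        div_le_div₀ (by positivity) (hS_up n hn) hd_pos hdle
      have h2 : (4 * Real.sqrt n * Real.exp (2 * Real.sqrt n)) /
          (Real.sqrt n / 2 * Real.exp (Real.sqrt n - 1)) ^ 2 = 16 * (Real.exp 1) ^ 2 / Real.sqrt n := by
        have e1 : Real.exp (Real.sqrt n - 1) = Real.exp (Real.sqrt n) / Real.exp 1 := Real.exp_sub _ _
        have e2 : Real.exp (2 * Real.sqrt n) = (Real.exp (Real.sqrt n)) ^ 2 := by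
          rw [two_mul, Real.exp_add, sq]
        have h3 : Real.sqrt n * Real.sqrt n = (n:ℝ) := Real.mul_self_sqrt (by positivity)
        have e3 : Real.exp 2 = Real.exp 1 ^ 2 := by rw [sq, ← Real.exp_add]; norm_num
        rw [e1, e2]
        field_simp
        norm_num
      linarith [h2 ▸ h1]
    apply squeeze_zero'
    · filter_upwards with n
      positivity
    · filter_upwards [eventually_ge_atTop 1] with n hn
      exact hbnd n hn
    · have : Tendsto (fun n : ℕ => (16 * (Real.exp 1) ^ 2) / Real.sqrt n) atTop (nhds 0) :=
        Tendsto.div_atTop tendsto_const_nhds sqrtN_tendsto'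
      exact this
  · -- part 2
    have hterm : ∀ n : ℕ, 1 ≤ n →
        1 / (64 * (n:ℝ)) ≤ (Real.exp (Real.sqrt (n : ℝ))) ^ 2 / (A n) ^ 2 := by
      intro n hn
      have hsn1 : (1:ℝ) ≤ Real.sqrt n := by
        rw [show (1:ℝ) = Real.sqrt 1 by simp]
        exact Real.sqrt_le_sqrt (by exact_mod_cast hn)
      have hsn0 : (0:ℝ) < Real.sqrt n := lt_of_lt_of_le one_pos hsn1
      have h3 : Real.sqrt n * Real.sqrt n = (n:ℝ) := Real.mul_self_sqrt (by positivity)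
      have hsq2 : (A n) ^ 2 ≤ (8 * Real.sqrt n * Real.exp (Real.sqrt n)) ^ 2 :=
        pow_le_pow_left₀ (hA_pos n hn).le (hA_up n hn) 2
      have h1 : (Real.exp (Real.sqrt (n:ℝ))) ^ 2 / (8 * Real.sqrt n * Real.exp (Real.sqrt n)) ^ 2
          ≤ (Real.exp (Real.sqrt (n:ℝ))) ^ 2 / (A n) ^ 2 := by
        apply div_le_div_of_nonneg_left (by positivity) (by positivity) hsq2
      have h2 : (Real.exp (Real.sqrt (n:ℝ))) ^ 2 / (8 * Real.sqrt n * Real.exp (Real.sqrt n)) ^ 2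
          = 1 / (64 * (n:ℝ)) := by
        have hn0 : (0:ℝ) < n := by exact_mod_cast hn
        field_simp
        nlinarith [Real.exp_pos (Real.sqrt n), sq_nonneg (Real.exp (Real.sqrt n))]
      linarith [h2 ▸ h1]
    have hlow : Tendsto (fun N : ℕ => ∑ n ∈ Finset.Icc 1 N, 1 / (64 * (n:ℝ))) atTop atTop := by
      have heq : ∀ N : ℕ, ∑ n ∈ Finset.Icc 1 N, 1 / (64 * (n:ℝ))
          = (1/64) * ∑ i ∈ Finset.range N, (1 / ((i:ℝ) + 1)) := by
        intro N
        rw [Finset.mul_sum, ← Finset.Ico_add_one_right_eq_Icc, Finset.sum_Ico_eq_sum_range]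
        rw [show N + 1 - 1 = N from rfl]
        apply Finset.sum_congr rfl
        intro i _
        push_cast
        field_simp
        ring
      simp only [heq]
      exact (tendsto_sum_range_one_div_nat_succ_atTop).const_mul_atTop (by norm_num)
    apply tendsto_atTop_mono _ hlow
    intro N
    apply Finset.sum_le_sum
    intro n hn
    rw [Finset.mem_Icc] at hn
    exact hterm n hn.1
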